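/- Let X ∼ Ber(p) be a Bernoulli random variable with parameter 0 < p < 1 (so P(X = 1) = p and P(X = 0) = 1 − p, viewed as a measure on ℝ with d = 1). Then V̄(P_X, 2) = (1/4)·min{p, 1 − p}. -/

import Mathlib

open MeasureTheory ProbabilityTheory ENNReal

noncomputable section

variable {d : ℕ} {𝒴 : Type*} [MeasurableSpace 𝒴]

/-- Law of `X - u` when `X ∼ P`, scalar case. -/
def shiftLaw1 (P : Measure ℝ) (u : ℝ) : Measure ℝ :=
  P.map (· - u)

/-- The mixture measure `μ_U = ∑_k P_{X-u_k}`, scalar case. -/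
def mixMeasure1 (P : Measure ℝ) {M : ℕ} (U : Fin M → ℝ) : Measure ℝ :=
  ∑ k : Fin M, shiftLaw1 P (U k)

/-- `H(P_X,t,M)` in the scalar case, where the constraint forces `u_k = kt`:
`∫ max_j (dP_{X−jt}/dμ_U) dμ_U`. -/
def Hfun1 (P : Measure ℝ) (M : ℕ) (t : ℝ) : ℝ≥0∞ :=
  ∫⁻ x, (⨆ j : Fin M,
      (shiftLaw1 P ((j : ℝ) * t)).rnDeriv (mixMeasure1 P fun k : Fin M => (k : ℝ) * t) x)
    ∂(mixMeasure1 P fun k : Fin M => (k : ℝ) * t)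

/-- High-noise Ziv–Zakai functional with valley-filling, scalar case. -/
def Vbar1 (P : Measure ℝ) (M : ℕ) : ℝ≥0∞ :=
  ∫⁻ t in Set.Ioi (0 : ℝ),
    ENNReal.ofReal (t / 2) *
      ⨆ (u : ℝ) (_ : t ≤ u), ((M : ℝ≥0∞) - Hfun1 P M u) / ((M : ℝ≥0∞) - 1)

/-! ### Auxiliary lemmas -/

lemma iSup_fin_two {α : Type*} [CompleteLattice α] (f : Fin 2 → α) :
    ⨆ j, f j = f 0 ⊔ f 1 := by
  refine le_antisymm (iSup_le fun j => ?_) (sup_le (le_iSup f 0) (le_iSup f 1))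
  fin_cases j
  · exact le_sup_left
  · exact le_sup_right

lemma shiftLaw1_eq (p : ℝ) (P : Measure ℝ)
    (hP : P = ENNReal.ofReal (1 - p) • Measure.dirac (0 : ℝ) +
        ENNReal.ofReal p • Measure.dirac (1 : ℝ)) (u : ℝ) :
    shiftLaw1 P u = ENNReal.ofReal (1 - p) • Measure.dirac (-u) +
      ENNReal.ofReal p • Measure.dirac (1 - u) := by
  subst hP
  unfold shiftLaw1
  rw [Measure.map_add _ _ (measurable_sub_const u), Measure.map_smul, Measure.map_smul,
    Measure.map_dirac' (measurable_sub_const u), Measure.map_dirac' (measurable_sub_const u)]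
  norm_num

lemma mixMeasure1_eq (p : ℝ) (P : Measure ℝ)
    (hP : P = ENNReal.ofReal (1 - p) • Measure.dirac (0 : ℝ) +
        ENNReal.ofReal p • Measure.dirac (1 : ℝ)) (t : ℝ) :
    (mixMeasure1 P fun k : Fin 2 => (k : ℝ) * t) =
      (ENNReal.ofReal (1 - p) • Measure.dirac (0 : ℝ) +
        ENNReal.ofReal p • Measure.dirac (1 : ℝ)) +
      (ENNReal.ofReal (1 - p) • Measure.dirac (-t) +
        ENNReal.ofReal p • Measure.dirac (1 - t)) := by
  unfold mixMeasure1
  rw [Fin.sum_univ_two]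
  show shiftLaw1 P (((0 : Fin 2) : ℝ) * t) + shiftLaw1 P (((1 : Fin 2) : ℝ) * t) = _
  have h0 : ((0 : Fin 2) : ℝ) * t = 0 := by norm_num
  have h1 : ((1 : Fin 2) : ℝ) * t = t := by norm_num
  rw [h0, h1, shiftLaw1_eq p P hP, shiftLaw1_eq p P hP]
  norm_num

lemma mix_finite (p : ℝ) (P : Measure ℝ)
    (hP : P = ENNReal.ofReal (1 - p) • Measure.dirac (0 : ℝ) +
        ENNReal.ofReal p • Measure.dirac (1 : ℝ)) (t : ℝ) :
    IsFiniteMeasure (mixMeasure1 P fun k : Fin 2 => (k : ℝ) * t) := by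
  rw [mixMeasure1_eq p P hP]
  constructor
  simp only [Measure.add_apply, Measure.smul_apply, smul_eq_mul, measure_univ, mul_one]
  exact ENNReal.add_lt_top.2 ⟨ENNReal.add_lt_top.2 ⟨ofReal_lt_top, ofReal_lt_top⟩,
    ENNReal.add_lt_top.2 ⟨ofReal_lt_top, ofReal_lt_top⟩⟩

/-- Generic `t`: the four atoms are distinct and `H = 2`. -/
lemma Hfun1_generic (p : ℝ) (hp0 : 0 < p) (hp1 : p < 1) (P : Measure ℝ)
    (hP : P = ENNReal.ofReal (1 - p) • Measure.dirac (0 : ℝ) +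
        ENNReal.ofReal p • Measure.dirac (1 : ℝ))
    (t : ℝ) (ht : 0 < t) (ht1 : t ≠ 1) :
    Hfun1 P 2 t = 2 := by
  classical
  set Q := ENNReal.ofReal (1 - p) with hQ
  set R := ENNReal.ofReal p with hR
  have hQR : Q + R = 1 := by
    rw [hQ, hR, ← ENNReal.ofReal_add (by linarith) (by linarith)]
    norm_num
  set μ := mixMeasure1 P fun k : Fin 2 => (k : ℝ) * t with hμ
  have hμeq : μ = (Q • Measure.dirac (0 : ℝ) + R • Measure.dirac (1 : ℝ)) +
      (Q • Measure.dirac (-t) + R • Measure.dirac (1 - t)) := mixMeasure1_eq p P hP t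
  haveI : IsFiniteMeasure μ := mix_finite p P hP t
  -- densities
  set f0 : ℝ → ℝ≥0∞ := ({0, 1} : Set ℝ).indicator 1 with hf0
  set f1 : ℝ → ℝ≥0∞ := ({-t, 1 - t} : Set ℝ).indicator 1 with hf1
  have hm0 : MeasurableSet ({0, 1} : Set ℝ) := by measurability
  have hm1 : MeasurableSet ({-t, 1 - t} : Set ℝ) := by measurability
  have hmf0 : Measurable f0 := measurable_one.indicator hm0
  have hmf1 : Measurable f1 := measurable_one.indicator hm1
  -- membership facts
  have hnt0 : -t ∉ ({0, 1} : Set ℝ) := by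
    simp only [Set.mem_insert_iff, Set.mem_singleton_iff]
    push_neg; constructor <;> linarith
  have hnt1 : 1 - t ∉ ({0, 1} : Set ℝ) := by
    simp only [Set.mem_insert_iff, Set.mem_singleton_iff]
    push_neg
    constructor
    · intro h; exact ht1 (by linarith)
    · intro h; exact absurd (by linarith : t = 0) (ne_of_gt ht)
  have h0nt : (0 : ℝ) ∉ ({-t, 1 - t} : Set ℝ) := by
    simp only [Set.mem_insert_iff, Set.mem_singleton_iff]
    push_neg
    exact ⟨by intro h; linarith, by intro h; exact ht1 (by linarith)⟩
  have h1nt : (1 : ℝ) ∉ ({-t, 1 - t} : Set ℝ) := by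
    simp only [Set.mem_insert_iff, Set.mem_singleton_iff]
    push_neg
    exact ⟨by intro h; linarith, by intro h; linarith⟩
  -- withDensity representations
  have hd0 : shiftLaw1 P 0 = μ.withDensity f0 := by
    rw [hf0, withDensity_indicator_one hm0, hμeq]
    simp only [Measure.restrict_add, Measure.restrict_smul, restrict_dirac' hm0]
    rw [shiftLaw1_eq p P hP 0]
    simp [hnt0, hnt1]
    rfl
  have hd1 : shiftLaw1 P t = μ.withDensity f1 := by
    rw [hf1, withDensity_indicator_one hm1, hμeq]
    simp only [Measure.restrict_add, Measure.restrict_smul, restrict_dirac' hm1]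
    rw [shiftLaw1_eq p P hP t]
    simp [h0nt, h1nt]
    rfl
  have hr0 : (shiftLaw1 P 0).rnDeriv μ =ᵐ[μ] f0 := by
    rw [hd0]; exact Measure.rnDeriv_withDensity μ hmf0
  have hr1 : (shiftLaw1 P t).rnDeriv μ =ᵐ[μ] f1 := by
    rw [hd1]; exact Measure.rnDeriv_withDensity μ hmf1
  have key : Hfun1 P 2 t = ∫⁻ x, (f0 x ⊔ f1 x) ∂μ := by
    unfold Hfun1
    rw [← hμ]
    refine lintegral_congr_ae ?_
    filter_upwards [hr0, hr1] with x hx0 hx1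
    rw [iSup_fin_two]
    have e0 : ((0 : Fin 2) : ℝ) * t = 0 := by norm_num
    have e1 : ((1 : Fin 2) : ℝ) * t = t := by norm_num
    rw [e0, e1, hx0, hx1]
  rw [key, hμeq]
  have hmF : Measurable fun x => f0 x ⊔ f1 x := hmf0.sup hmf1
  simp only [lintegral_add_measure, lintegral_smul_measure, lintegral_dirac' _ hmF]
  have v0 : f0 (0 : ℝ) ⊔ f1 (0 : ℝ) = 1 := by
    rw [hf0, hf1]; simp [h0nt]
  have v1 : f0 (1 : ℝ) ⊔ f1 (1 : ℝ) = 1 := by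
    rw [hf0, hf1]; simp [h1nt]
  have v2 : f0 (-t) ⊔ f1 (-t) = 1 := by
    rw [hf0, hf1]; simp [hnt0]
  have v3 : f0 (1 - t) ⊔ f1 (1 - t) = 1 := by
    rw [hf0, hf1]; simp [hnt1]
  rw [v0, v1, v2, v3]
  simp only [smul_eq_mul, mul_one]
  rw [hQR]
  norm_num

/-- At `t = 1`: `H = 1 + max(1-p, p)`. -/
lemma Hfun1_one (p : ℝ) (hp0 : 0 < p) (hp1 : p < 1) (P : Measure ℝ)
    (hP : P = ENNReal.ofReal (1 - p) • Measure.dirac (0 : ℝ) +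
        ENNReal.ofReal p • Measure.dirac (1 : ℝ)) :
    Hfun1 P 2 1 = ENNReal.ofReal (1 + max (1 - p) p) := by
  classical
  set Q := ENNReal.ofReal (1 - p) with hQ
  set R := ENNReal.ofReal p with hR
  have hQR : Q + R = 1 := by
    rw [hQ, hR, ← ENNReal.ofReal_add (by linarith) (by linarith)]
    norm_num
  set μ := mixMeasure1 P fun k : Fin 2 => (k : ℝ) * 1 with hμ
  have hμeq : μ = (Q • Measure.dirac (0 : ℝ) + R • Measure.dirac (1 : ℝ)) +
      (Q • Measure.dirac (-1 : ℝ) + R • Measure.dirac (0 : ℝ)) := by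
    have h := mixMeasure1_eq p P hP 1
    rw [← hμ] at h
    rw [h, show (1:ℝ) - 1 = 0 by norm_num]
  haveI : IsFiniteMeasure μ := mix_finite p P hP 1
  set f0 : ℝ → ℝ≥0∞ := ({0} : Set ℝ).indicator (fun _ => Q) + ({1} : Set ℝ).indicator 1 with hf0
  set f1 : ℝ → ℝ≥0∞ := ({0} : Set ℝ).indicator (fun _ => R) + ({-1} : Set ℝ).indicator 1 with hf1
  have hms0 : MeasurableSet ({0} : Set ℝ) := measurableSet_singleton _
  have hms1 : MeasurableSet ({1} : Set ℝ) := measurableSet_singleton _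
  have hmsm1 : MeasurableSet ({-1} : Set ℝ) := measurableSet_singleton _
  have hmf0 : Measurable f0 :=
    (measurable_const.indicator hms0).add (measurable_one.indicator hms1)
  have hmf1 : Measurable f1 :=
    (measurable_const.indicator hms0).add (measurable_one.indicator hmsm1)
  have hr00 : μ.restrict {0} = Measure.dirac ( 0 : ℝ) := by
    rw [hμeq]
    simp only [Measure.restrict_add, Measure.restrict_smul, restrict_dirac' hms0]
    norm_num
    rw [← add_smul, hQR, one_smul]
  have hr11 : μ.restrict {1} = R • Measure.dirac (1 : ℝ) := by
    rw [hμeq]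
    simp only [Measure.restrict_add, Measure.restrict_smul, restrict_dirac' hms1]
    norm_num
  have hrm1 : μ.restrict {-1} = Q • Measure.dirac (-1 : ℝ) := by
    rw [hμeq]
    simp only [Measure.restrict_add, Measure.restrict_smul, restrict_dirac' hmsm1]
    norm_num
  have hd0 : shiftLaw1 P 0 = μ.withDensity f0 := by
    rw [hf0, withDensity_add_right _ (measurable_one.indicator hms1),
      withDensity_indicator hms0, withDensity_indicator_one hms1,
      withDensity_const, hr00, hr11, shiftLaw1_eq p P hP 0]
    norm_num
    rfl
  have hd1 : shiftLaw1 P 1 = μ.withDensity f1 := by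
    rw [hf1, withDensity_add_right _ (measurable_one.indicator hmsm1),
      withDensity_indicator hms0, withDensity_indicator_one hmsm1,
      withDensity_const, hr00, hrm1, shiftLaw1_eq p P hP 1]
    norm_num
    rw [add_comm]
  have hr0 : (shiftLaw1 P 0).rnDeriv μ =ᵐ[μ] f0 := by
    rw [hd0]; exact Measure.rnDeriv_withDensity μ hmf0
  have hr1 : (shiftLaw1 P 1).rnDeriv μ =ᵐ[μ] f1 := by
    rw [hd1]; exact Measure.rnDeriv_withDensity μ hmf1
  have key : Hfun1 P 2 1 = ∫⁻ x, (f0 x ⊔ f1 x) ∂μ := by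
    unfold Hfun1
    rw [← hμ]
    refine lintegral_congr_ae ?_
    filter_upwards [hr0, hr1] with x hx0 hx1
    rw [iSup_fin_two]
    have e0 : ((0 : Fin 2) : ℝ) * 1 = 0 := by norm_num
    have e1 : ((1 : Fin 2) : ℝ) * 1 = 1 := by norm_num
    rw [e0, e1, hx0, hx1]
  rw [key, hμeq]
  have hmF : Measurable fun x => f0 x ⊔ f1 x := hmf0.sup hmf1
  simp only [lintegral_add_measure, lintegral_smul_measure, lintegral_dirac' _ hmF]
  have hQ1 : Q ≤ 1 := hQ ▸ ofReal_le_one.2 (by linarith)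
  have hR1 : R ≤ 1 := hR ▸ ofReal_le_one.2 hp1.le
  have v0 : f0 (0 : ℝ) ⊔ f1 (0 : ℝ) = Q ⊔ R := by
    rw [hf0, hf1]
    simp [Set.indicator_apply]
  have v1 : f0 (1 : ℝ) ⊔ f1 (1 : ℝ) = 1 := by
    rw [hf0, hf1]
    simp [Set.indicator_apply]
    norm_num
  have v2 : f0 (-1 : ℝ) ⊔ f1 (-1 : ℝ) = 1 := by
    rw [hf0, hf1]
    simp [Set.indicator_apply]
    norm_num
  rw [v0, v1, v2]; simp only [smul_eq_mul, mul_one]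
  have hmax : Q ⊔ R = ENNReal.ofReal (max (1 - p) p) := by
    rw [hQ, hR]
    rcases le_total (1 - p) p with h | h
    · rw [max_eq_right h, sup_eq_right.2 (ofReal_le_ofReal h)]
    · rw [max_eq_left h, sup_eq_left.2 (ofReal_le_ofReal h)]
  calc Q * (Q ⊔ R) + R + (Q + R * (Q ⊔ R))
      = (Q + R) * (Q ⊔ R) + (Q + R) := by ring
    _ = 1 * (Q ⊔ R) + 1 := by rw [hQR]
    _ = ENNReal.ofReal (max (1 - p) p) + ENNReal.ofReal 1 := by
        rw [one_mul, hmax, ofReal_one]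
    _ = ENNReal.ofReal (1 + max (1 - p) p) := by
        rw [← ENNReal.ofReal_add (le_max_iff.2 (Or.inr hp0.le)) zero_le_one, add_comm]

/-- **High-noise Ziv–Zakai functional of a Bernoulli input.**
If `X ∼ Ber(p)` with `0 < p < 1`, then `V̄(P_X, 2) = (1/4)·min{p, 1−p}`. -/
theorem bernoulli_high_noise_value
    (p : ℝ) (hp0 : 0 < p) (hp1 : p < 1)
    (P : Measure ℝ)
    (hP : P = ENNReal.ofReal (1 - p) • Measure.dirac (0 : ℝ) +
        ENNReal.ofReal p • Measure.dirac (1 : ℝ)) :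
    Vbar1 P 2 = ENNReal.ofReal (min p (1 - p) / 4) := by
  classical
  set m : ℝ≥0∞ := ENNReal.ofReal (min p (1 - p)) with hm
  -- value of `2 - H(u)` for `u > 0`
  have hsub : ∀ u : ℝ, 0 < u → (2 : ℝ≥0∞) - Hfun1 P 2 u = if u = 1 then m else 0 := by
    intro u hu
    by_cases h1 : u = 1
    · subst h1
      rw [Hfun1_one p hp0 hp1 P hP, if_pos rfl, hm]
      rw [show (2 : ℝ≥0∞) = ENNReal.ofReal 2 by norm_num,
        ← ENNReal.ofReal_sub _ (by positivity)]
      congr 1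
      rcases le_total p (1 - p) with h | h
      · rw [min_eq_left h, max_eq_left (by linarith)]; ring
      · rw [min_eq_right h, max_eq_right (by linarith)]; ring
    · rw [Hfun1_generic p hp0 hp1 P hP u hu h1, if_neg h1, tsub_self]
  have h21 : ((2 : ℕ) : ℝ≥0∞) - 1 = 1 := by
    rw [show ((2 : ℕ) : ℝ≥0∞) = 1 + 1 by norm_num]
    exact ENNReal.add_sub_cancel_left one_ne_top
  have h2c : ((2 : ℕ) : ℝ≥0∞) = 2 := by norm_num
  -- value of the valley-filled sup
  have hsup : ∀ t : ℝ, 0 < t →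
      (⨆ (u : ℝ) (_ : t ≤ u), (((2 : ℕ) : ℝ≥0∞) - Hfun1 P 2 u) / (((2 : ℕ) : ℝ≥0∞) - 1)) =
      if t ≤ 1 then m else 0 := by
    intro t ht
    have hval : ∀ u : ℝ, t ≤ u →
        (((2 : ℕ) : ℝ≥0∞) - Hfun1 P 2 u) / (((2 : ℕ) : ℝ≥0∞) - 1) =
          if u = 1 then m else 0 := by
      intro u hu
      rw [h21, h2c, div_one, hsub u (lt_of_lt_of_le ht hu)]
    by_cases htle : t ≤ 1
    · rw [if_pos htle]
      refine le_antisymm (iSup_le fun u => iSup_le fun hu => ?_) ?_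
      · rw [hval u hu]
        split_ifs
        · exact le_rfl
        · exact zero_le
      · have : (((2 : ℕ) : ℝ≥0∞) - Hfun1 P 2 1) / (((2 : ℕ) : ℝ≥0∞) - 1) = m := by
          rw [hval 1 htle, if_pos rfl]
        calc m = (((2 : ℕ) : ℝ≥0∞) - Hfun1 P 2 1) / (((2 : ℕ) : ℝ≥0∞) - 1) := this.symm
          _ ≤ _ := le_iSup₂ (f := fun (u : ℝ) (_ : t ≤ u) =>
              (((2 : ℕ) : ℝ≥0∞) - Hfun1 P 2 u) / (((2 : ℕ) : ℝ≥0∞) - 1)) 1 htle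
    · rw [if_neg htle]
      refine le_antisymm (iSup_le fun u => iSup_le fun hu => ?_) zero_le
      rw [hval u hu, if_neg (by intro h; subst h; exact htle hu)]
  -- rewrite the integrand as an indicator
  have hint : Vbar1 P 2 =
      ∫⁻ t in Set.Ioi (0 : ℝ),
        (Set.Ioc (0 : ℝ) 1).indicator (fun t => ENNReal.ofReal (t / 2) * m) t := by
    unfold Vbar1
    refine setLIntegral_congr_fun measurableSet_Ioi (fun t ht => ?_)
    have ht' : 0 < t := ht
    rw [hsup t ht']
    by_cases h : t ≤ 1
    · rw [if_pos h, Set.indicator_of_mem (Set.mem_Ioc.2 ⟨ht', h⟩)]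
    · rw [if_neg h, mul_zero, Set.indicator_of_notMem (by
        intro hmem
        exact h (Set.mem_Ioc.1 hmem).2)]
  rw [hint, lintegral_indicator measurableSet_Ioc, Measure.restrict_restrict measurableSet_Ioc,
    Set.inter_eq_left.2 (fun x hx => hx.1)]
  rw [lintegral_mul_const _ (by measurability)]
  have hIoc : ∫⁻ t in Set.Ioc (0 : ℝ) 1, ENNReal.ofReal (t / 2) = ENNReal.ofReal (1 / 4) := by
    rw [← ofReal_integral_eq_lintegral_ofReal]
    · congr 1
      rw [← intervalIntegral.integral_of_le zero_le_one]
      rw [intervalIntegral.integral_div, integral_id]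
      norm_num
    · exact (continuous_id.div_const 2).integrableOn_Ioc
    · filter_upwards [ae_restrict_mem measurableSet_Ioc] with x hx
      exact div_nonneg hx.1.le (by norm_num)
  rw [hIoc, hm, ← ENNReal.ofReal_mul (by norm_num)]
  congr 1
  ring
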